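/- Let $R$ be a commutative ring, $V$ a free $R$-module of finite rank $v$, and $\phi : V \to R$ a surjective $R$-linear map. Then the Koszul complex $\bigwedge^v V \to \bigwedge^{v-1} V \to \cdots \to \bigwedge^1 V \to R \to 0$ with differentials given by contraction against $\phi$ is exact. -/
import Mathlib

/-- The wedge of a family of vectors, as an element of the `n`-th exterior power. -/
noncomputable def exteriorWedge (k : Type*) [CommRing k] {M : Type*} [AddCommGroup M]
    [Module k M] (n : ℕ) (v : Fin n → M) : ⋀[k]^n M :=
  ⟨ExteriorAlgebra.ιMulti k n v, ExteriorAlgebra.ιMulti_range k n (Set.mem_range_self v)⟩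

open ExteriorAlgebra in
private lemma KX_contract_ιMulti {R : Type*} [CommRing R] {M : Type*} [AddCommGroup M]
    [Module R M] (φ : Module.Dual R M) :
    ∀ (p : ℕ) (w : Fin (p + 1) → M),
      CliffordAlgebra.contractLeft (Q := (0 : QuadraticForm R M)) φ (ιMulti R (p + 1) w) =
        ∑ i : Fin (p + 1), ((-1 : R) ^ (i : ℕ) * φ (w i)) • ιMulti R p (w ∘ i.succAbove) := by
  intro p
  induction p with
  | zero =>
    intro w
    rw [ιMulti_succ_apply, CliffordAlgebra.contractLeft_ι_mul]
    simp [CliffordAlgebra.contractLeft_one]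
  | succ p ih =>
    intro w
    have h0 : w ∘ (0 : Fin (p + 2)).succAbove = Matrix.vecTail w := by
      funext k; simp [Matrix.vecTail, Fin.succAbove]
    have hsucc : ∀ j : Fin (p + 1),
        ιMulti R (p + 1) (w ∘ (j.succ).succAbove)
          = ι R (w 0) * ιMulti R p (Matrix.vecTail w ∘ j.succAbove) := by
      intro j
      rw [ιMulti_succ_apply]
      have h1 : (w ∘ (j.succ).succAbove) 0 = w 0 := by
        simp [Function.comp, Fin.succ_succAbove_zero]
      have h2 : Matrix.vecTail (w ∘ (j.succ).succAbove) = Matrix.vecTail w ∘ j.succAbove := by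
        funext k; simp [Matrix.vecTail, Function.comp, Fin.succ_succAbove_succ]
      rw [h1, h2]
    conv_rhs => rw [Fin.sum_univ_succ, h0]
    simp only [hsucc]
    rw [ιMulti_succ_apply, CliffordAlgebra.contractLeft_ι_mul, ih,
      Finset.mul_sum, sub_eq_add_neg, ← Finset.sum_neg_distrib]
    congr 1
    · simp
    · apply Finset.sum_congr rfl
      intro j _
      rw [mul_smul_comm, ← neg_smul]
      congr 1
      simp only [Matrix.vecTail, Function.comp, Fin.val_succ, pow_succ]
      ring

open ExteriorAlgebra in
private lemma KX_top_zero {R : Type*} [CommRing R] (v : ℕ) (w : Fin (v + 1) → (Fin v → R)) :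
    ιMulti R (v + 1) w = 0 := by
  classical
  have hw : w = fun i => ∑ j : Fin v, w i j • (Pi.basisFun R (Fin v)) j := by
    funext i
    have := (Pi.basisFun R (Fin v)).sum_repr (w i)
    simp only [Pi.basisFun_repr] at this
    exact this.symm
  rw [hw]
  rw [show (ιMulti R (v+1) (fun i => ∑ j : Fin v, w i j • (Pi.basisFun R (Fin v)) j)
        : ExteriorAlgebra R (Fin v → R))
      = (ιMulti R (v+1)).toMultilinearMap
          (fun i => ∑ j : Fin v, w i j • (Pi.basisFun R (Fin v)) j) from rfl]
  rw [MultilinearMap.map_sum]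
  apply Finset.sum_eq_zero
  intro r _
  rw [show ((ιMulti R (v+1)).toMultilinearMap fun i => w i (r i) • (Pi.basisFun R (Fin v)) (r i))
      = (∏ i, w i (r i)) • (ιMulti R (v+1)).toMultilinearMap
          (fun i => (Pi.basisFun R (Fin v)) (r i))
    from MultilinearMap.map_smul_univ _ _ _]
  obtain ⟨i, j, hne, heq⟩ := Fintype.exists_ne_map_eq_of_card_lt r (by simp)
  rw [show (ιMulti R (v+1)).toMultilinearMap (fun i => (Pi.basisFun R (Fin v)) (r i))
      = ιMulti R (v+1) (fun i => (Pi.basisFun R (Fin v)) (r i)) from rfl]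
  rw [(ιMulti R (v+1)).map_eq_zero_of_eq _ (by rw [heq]) hne, smul_zero]

set_option maxHeartbeats 1600000 in
/-- for a commutative ring `R`, `V = R^v` free of rank `v`, and a
surjective `R`-linear map `φ : V → R`, the Koszul complex
`⋀^v V → ⋀^(v-1) V → ⋯ → ⋀^1 V → R → 0` with differentials given by contraction
against `φ` is exact.  Here `⋀^0 V ≅ R`, so exactness at `R` is surjectivity of `d 0`,
exactness at `⋀^v V` is injectivity of the top differential, and at the interior terms
the image of the incoming differential is the kernel of the outgoing one. -/
theorem koszul_complex_exact_of_surjective (R : Type*) [CommRing R] (v : ℕ)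
    (φ : (Fin v → R) →ₗ[R] R) (hφ : Function.Surjective φ)
    (d : ∀ p : ℕ, (⋀[R]^(p + 1) (Fin v → R)) →ₗ[R] (⋀[R]^p (Fin v → R)))
    (hd : ∀ (p : ℕ) (w : Fin (p + 1) → (Fin v → R)),
      d p (exteriorWedge R (p + 1) w) =
        ∑ i : Fin (p + 1), ((-1 : R) ^ (i : ℕ) * φ (w i)) •
          exteriorWedge R p (w ∘ i.succAbove)) :
    (∀ n : ℕ, n + 2 ≤ v → LinearMap.range (d (n + 1)) = LinearMap.ker (d n)) ∧
    (∀ n : ℕ, n + 1 = v → Function.Injective (d n)) ∧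
    Function.Surjective (d 0) := by
  classical
  obtain ⟨e, he⟩ := hφ 1
  set C : ExteriorAlgebra R (Fin v → R) →ₗ[R] ExteriorAlgebra R (Fin v → R) :=
    CliffordAlgebra.contractLeft (Q := (0 : QuadraticForm R (Fin v → R))) φ with hC
  -- the given differential agrees with left contraction
  have key : ∀ (p : ℕ) (x : ExteriorAlgebra R (Fin v → R))
      (hx : x ∈ ⋀[R]^(p + 1) (Fin v → R)),
      ((d p ⟨x, hx⟩ : ⋀[R]^p (Fin v → R)) : ExteriorAlgebra R (Fin v → R)) = C x := by
    intro p x hx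
    have hx' : x ∈ Submodule.span R
        (Set.range (ExteriorAlgebra.ιMulti R (p + 1) (M := Fin v → R))) := by
      rwa [ExteriorAlgebra.ιMulti_span_fixedDegree]
    revert hx
    induction hx' using Submodule.span_induction with
    | mem y hy =>
      obtain ⟨w, rfl⟩ := hy
      intro hx
      have h1 : (⟨ExteriorAlgebra.ιMulti R (p + 1) w, hx⟩ : ⋀[R]^(p + 1) (Fin v → R))
          = exteriorWedge R (p + 1) w := Subtype.ext rfl
      rw [h1, hd p w, hC, KX_contract_ιMulti]
      push_cast [Submodule.coe_sum]
      rfl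
    | zero =>
      intro hx
      have h1 : (⟨(0 : ExteriorAlgebra R (Fin v → R)), hx⟩ : ⋀[R]^(p + 1) (Fin v → R)) = 0 :=
        Subtype.ext rfl
      rw [h1, map_zero, map_zero]
      rfl
    | add y z hy hz ihy ihz =>
      intro hx
      have hy' : y ∈ ⋀[R]^(p + 1) (Fin v → R) := by
        rw [← ExteriorAlgebra.ιMulti_span_fixedDegree]; exact hy
      have hz' : z ∈ ⋀[R]^(p + 1) (Fin v → R) := by
        rw [← ExteriorAlgebra.ιMulti_span_fixedDegree]; exact hz
      have h1 : (⟨y + z, hx⟩ : ⋀[R]^(p + 1) (Fin v → R)) = ⟨y, hy'⟩ + ⟨z, hz'⟩ :=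
        Subtype.ext rfl
      rw [h1, map_add, map_add, Submodule.coe_add, ihy hy', ihz hz']
    | smul a y hy ihy =>
      intro hx
      have hy' : y ∈ ⋀[R]^(p + 1) (Fin v → R) := by
        rw [← ExteriorAlgebra.ιMulti_span_fixedDegree]; exact hy
      have h1 : (⟨a • y, hx⟩ : ⋀[R]^(p + 1) (Fin v → R)) = a • ⟨y, hy'⟩ := Subtype.ext rfl
      rw [h1, map_smul, map_smul, Submodule.coe_smul, ihy hy']
  have hmul : ∀ (p : ℕ) (x : ExteriorAlgebra R (Fin v → R)), x ∈ ⋀[R]^p (Fin v → R) →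
      ExteriorAlgebra.ι R e * x ∈ ⋀[R]^(p + 1) (Fin v → R) := by
    intro p x hx
    have h : (⋀[R]^(p + 1) (Fin v → R))
        = LinearMap.range (ExteriorAlgebra.ι R (M := Fin v → R)) * ⋀[R]^p (Fin v → R) :=
      pow_succ' _ _
    rw [h]
    exact Submodule.mul_mem_mul (LinearMap.mem_range_self _ e) hx
  have hom : ∀ x : ExteriorAlgebra R (Fin v → R),
      C (ExteriorAlgebra.ι R e * x) = x - ExteriorAlgebra.ι R e * C x := by
    intro x
    rw [hC, CliffordAlgebra.contractLeft_ι_mul, he, one_smul]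
  have hdd : ∀ (n : ℕ) (x : ⋀[R]^(n + 2) (Fin v → R)), d n (d (n + 1) x) = 0 := by
    intro n x
    have h1 : ((d n (d (n + 1) x) : ⋀[R]^n (Fin v → R)) : ExteriorAlgebra R (Fin v → R))
        = C ((d (n + 1) x : ⋀[R]^(n + 1) (Fin v → R)) : ExteriorAlgebra R (Fin v → R)) :=
      key n _ (d (n + 1) x).2
    have h2 : ((d (n + 1) x : ⋀[R]^(n + 1) (Fin v → R)) : ExteriorAlgebra R (Fin v → R))
        = C (x : ExteriorAlgebra R (Fin v → R)) := key (n + 1) _ x.2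
    refine Subtype.ext ?_
    rw [ZeroMemClass.coe_zero, h1, h2, hC]
    exact CliffordAlgebra.contractLeft_contractLeft (Q := (0 : QuadraticForm R (Fin v → R)))
      (d := φ) _
  have htop : ∀ x ∈ ⋀[R]^(v + 1) (Fin v → R), x = (0 : ExteriorAlgebra R (Fin v → R)) := by
    intro x hx
    have hx' : x ∈ Submodule.span R
        (Set.range (ExteriorAlgebra.ιMulti R (v + 1) (M := Fin v → R))) := by
      rwa [ExteriorAlgebra.ιMulti_span_fixedDegree]
    induction hx' using Submodule.span_induction with
    | mem y hy => obtain ⟨w, rfl⟩ := hy; exact KX_top_zero v w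
    | zero => rfl
    | add y z hy hz ihy ihz =>
      rw [ihy (by rwa [← ExteriorAlgebra.ιMulti_span_fixedDegree]),
        ihz (by rwa [← ExteriorAlgebra.ιMulti_span_fixedDegree]), add_zero]
    | smul a y hy ihy =>
      rw [ihy (by rwa [← ExteriorAlgebra.ιMulti_span_fixedDegree]), smul_zero]
  refine ⟨?_, ?_, ?_⟩
  · intro n _
    apply le_antisymm
    · rintro y ⟨x, rfl⟩
      exact LinearMap.mem_ker.mpr (hdd n x)
    · intro y hy
      rw [LinearMap.mem_ker] at hy
      have h : ((d n y : ⋀[R]^n (Fin v → R)) : ExteriorAlgebra R (Fin v → R))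
          = C (y : ExteriorAlgebra R (Fin v → R)) := key n _ y.2
      have hy0 : C ((y : ⋀[R]^(n + 1) (Fin v → R)) : ExteriorAlgebra R (Fin v → R)) = 0 := by
        rw [hy] at h
        exact h.symm.trans rfl
      refine ⟨⟨ExteriorAlgebra.ι R e * ↑y, hmul (n + 1) _ y.2⟩, Subtype.ext ?_⟩
      have h2 : ((d (n + 1) (⟨ExteriorAlgebra.ι R e * ↑y, hmul (n + 1) _ y.2⟩ :
            ⋀[R]^(n + 2) (Fin v → R)) : ⋀[R]^(n + 1) (Fin v → R)) :
            ExteriorAlgebra R (Fin v → R))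
          = C (ExteriorAlgebra.ι R e * ↑y) := key (n + 1) _ _
      rw [h2, hom, hy0, mul_zero, sub_zero]
  · intro n hn
    subst hn
    refine LinearMap.ker_eq_bot.mp ((Submodule.eq_bot_iff _).mpr ?_)
    intro y hy
    rw [LinearMap.mem_ker] at hy
    have h : ((d n y : ⋀[R]^n (Fin (n + 1) → R)) : ExteriorAlgebra R (Fin (n + 1) → R))
        = C (y : ExteriorAlgebra R (Fin (n + 1) → R)) := key n _ y.2
    have hy0 : C ((y : ⋀[R]^(n + 1) (Fin (n + 1) → R)) :
        ExteriorAlgebra R (Fin (n + 1) → R)) = 0 := by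
      rw [hy] at h
      exact h.symm.trans rfl
    have hz : ExteriorAlgebra.ι R e * (y : ExteriorAlgebra R (Fin (n + 1) → R)) = 0 :=
      htop _ (hmul (n + 1) _ y.2)
    have h3 := hom (y : ExteriorAlgebra R (Fin (n + 1) → R))
    rw [hz, map_zero, hy0, mul_zero, sub_zero] at h3
    exact Subtype.ext h3.symm
  · intro y
    have h2 : ∀ z : ExteriorAlgebra R (Fin v → R), z ∈ ⋀[R]^0 (Fin v → R) →
        ∃ r : R, algebraMap R (ExteriorAlgebra R (Fin v → R)) r = z := by
      intro z hz
      rw [show (⋀[R]^0 (Fin v → R))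
        = (1 : Submodule R (ExteriorAlgebra R (Fin v → R))) from pow_zero _] at hz
      exact Submodule.mem_one.mp hz
    obtain ⟨r, hr⟩ := h2 _ y.2
    have hy0 : C ((y : ⋀[R]^0 (Fin v → R)) : ExteriorAlgebra R (Fin v → R)) = 0 := by
      rw [← hr, hC]
      exact CliffordAlgebra.contractLeft_algebraMap
        (Q := (0 : QuadraticForm R (Fin v → R))) (d := φ) r
    refine ⟨⟨ExteriorAlgebra.ι R e * ↑y, hmul 0 _ y.2⟩, Subtype.ext ?_⟩
    have h2 : ((d 0 (⟨ExteriorAlgebra.ι R e * ↑y, hmul 0 _ y.2⟩ :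
          ⋀[R]^1 (Fin v → R)) : ⋀[R]^0 (Fin v → R)) : ExteriorAlgebra R (Fin v → R))
        = C (ExteriorAlgebra.ι R e * ↑y) := key 0 _ _
    rw [h2, hom, hy0, mul_zero, sub_zero]
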